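/- arXiv:2505.20784 — 3 statements merged into one kernel-verified Lean document; each statement's English description precedes it below -/
import Mathlib

section
/- Let G be a bipartite graph with bipartition (A,B) and let v1, v2, v3 be three distinct vertices of A. Let G' be obtained from G by adding the three edges v1v2, v2v3, and v1v3, and let G'' be obtained from G' by additionally adding all edges between distinct vertices of B. Then G'' is (P6, 2P3, 3P2)-free; in particular, (G', A, B) is a partitioned probe (P6, 2P3, 3P2)-free graph. -/
open SimpleGraph

/-- `H` does not occur as an induced subgraph of `G`. -/
def IndFree {W V : Type*} (H : SimpleGraph W) (G : SimpleGraph V) : Prop :=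
  IsEmpty (H ↪g G)

/-- The graph `2P₃`: the disjoint union of two paths on three vertices
(paths `0 - 1 - 2` and `3 - 4 - 5`). -/
def twoP3 : SimpleGraph (Fin 6) :=
  SimpleGraph.fromRel (fun i j =>
    (i = 0 ∧ j = 1) ∨ (i = 1 ∧ j = 2) ∨ (i = 3 ∧ j = 4) ∨ (i = 4 ∧ j = 5))

/-- The graph `3P₂`: the disjoint union of three edges (`2k` paired with `2k+1`). -/
def threeP2 : SimpleGraph (Fin 6) :=
  SimpleGraph.fromRel (fun i j => (i : ℕ) / 2 = (j : ℕ) / 2)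

instance : DecidableRel (pathGraph 6).Adj :=
  fun u v => decidable_of_iff _ (pathGraph_adj (n := 6) (u := u) (v := v)).symm

instance : DecidableRel twoP3.Adj :=
  fun u v => decidable_of_iff _ (SimpleGraph.fromRel_adj _ u v).symm

instance : DecidableRel threeP2.Adj :=
  fun u v => decidable_of_iff _ (SimpleGraph.fromRel_adj _ u v).symm

set_option synthInstance.maxSize 1024 in
set_option synthInstance.maxHeartbeats 2000000 in
set_option maxHeartbeats 8000000 in
set_option maxRecDepth 10000 in
lemma unsat_path : ∀ b t : Fin 6 → Bool,
    (∀ i j : Fin 6, b i = true → b j = true → i ≠ j → (pathGraph 6).Adj i j) →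
    (∀ i j : Fin 6, t i = true → t j = true → i ≠ j → (pathGraph 6).Adj i j) →
    (∀ i j : Fin 6, (pathGraph 6).Adj i j →
      b i = true ∨ b j = true ∨ (t i = true ∧ t j = true)) → False := by decide

set_option synthInstance.maxSize 1024 in
set_option synthInstance.maxHeartbeats 2000000 in
set_option maxHeartbeats 8000000 in
set_option maxRecDepth 10000 in
lemma unsat_2p3 : ∀ b t : Fin 6 → Bool,
    (∀ i j : Fin 6, b i = true → b j = true → i ≠ j → twoP3.Adj i j) →
    (∀ i j : Fin 6, t i = true → t j = true → i ≠ j → twoP3.Adj i j) →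
    (∀ i j : Fin 6, twoP3.Adj i j →
      b i = true ∨ b j = true ∨ (t i = true ∧ t j = true)) → False := by decide

set_option synthInstance.maxSize 1024 in
set_option synthInstance.maxHeartbeats 2000000 in
set_option maxHeartbeats 8000000 in
set_option maxRecDepth 10000 in
lemma unsat_3p2 : ∀ b t : Fin 6 → Bool,
    (∀ i j : Fin 6, b i = true → b j = true → i ≠ j → threeP2.Adj i j) →
    (∀ i j : Fin 6, t i = true → t j = true → i ≠ j → threeP2.Adj i j) →
    (∀ i j : Fin 6, threeP2.Adj i j →
      b i = true ∨ b j = true ∨ (t i = true ∧ t j = true)) → False := by decide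

/-- If every pair of distinct `B`-vertices and every pair of distinct `T`-vertices is
adjacent in `G`, and every edge of `G` touches `B` or lies inside `T`, then `G` is
`H`-free whenever the corresponding boolean constraint system is unsatisfiable. -/
lemma indFree_of_unsat {V : Type*} {H : SimpleGraph (Fin 6)} (G : SimpleGraph V)
    (B T : Set V)
    (hB : ∀ u v, u ∈ B → v ∈ B → u ≠ v → G.Adj u v)
    (hT : ∀ u v, u ∈ T → v ∈ T → u ≠ v → G.Adj u v)
    (hcov : ∀ u v, G.Adj u v → u ∈ B ∨ v ∈ B ∨ (u ∈ T ∧ v ∈ T))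
    (hunsat : ∀ b t : Fin 6 → Bool,
      (∀ i j : Fin 6, b i = true → b j = true → i ≠ j → H.Adj i j) →
      (∀ i j : Fin 6, t i = true → t j = true → i ≠ j → H.Adj i j) →
      (∀ i j : Fin 6, H.Adj i j →
        b i = true ∨ b j = true ∨ (t i = true ∧ t j = true)) → False) :
    IndFree H G := by
  classical
  constructor
  intro f
  set b : Fin 6 → Bool := fun i => decide (f i ∈ B) with hb
  set t : Fin 6 → Bool := fun i => decide (f i ∈ T) with ht
  refine hunsat b t ?_ ?_ ?_
  · intro i j hi hj hne
    exact f.map_rel_iff.mp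
      (hB _ _ (of_decide_eq_true hi) (of_decide_eq_true hj)
        (fun h => hne (f.injective h)))
  · intro i j hi hj hne
    exact f.map_rel_iff.mp
      (hT _ _ (of_decide_eq_true hi) (of_decide_eq_true hj)
        (fun h => hne (f.injective h)))
  · intro i j hij
    have := hcov _ _ (f.map_rel_iff.mpr hij)
    rcases this with h | h | ⟨h1, h2⟩
    · exact Or.inl (decide_eq_true h)
    · exact Or.inr (Or.inl (decide_eq_true h))
    · exact Or.inr (Or.inr ⟨decide_eq_true h1, decide_eq_true h2⟩)

theorem stmt_15 {V : Type*} [Fintype V] (G : SimpleGraph V) (A B : Set V)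
    (hpart : ∀ x, x ∈ A ↔ x ∉ B)
    (hbip : ∀ u v, G.Adj u v → (u ∈ A ∧ v ∈ B) ∨ (u ∈ B ∧ v ∈ A))
    (v₁ v₂ v₃ : V) (hv₁ : v₁ ∈ A) (hv₂ : v₂ ∈ A) (hv₃ : v₃ ∈ A)
    (h12 : v₁ ≠ v₂) (h13 : v₁ ≠ v₃) (h23 : v₂ ≠ v₃)
    -- `G'` is `G` plus the three edges `v₁v₂`, `v₂v₃`, `v₁v₃`
    (G' : SimpleGraph V)
    (hG' : ∀ u v, G'.Adj u v ↔ (G.Adj u v ∨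
      (u ≠ v ∧ u ∈ ({v₁, v₂, v₃} : Set V) ∧ v ∈ ({v₁, v₂, v₃} : Set V))))
    -- `G''` is `G'` plus all edges between distinct vertices of `B`
    (G'' : SimpleGraph V)
    (hG'' : ∀ u v, G''.Adj u v ↔ (G'.Adj u v ∨ (u ≠ v ∧ u ∈ B ∧ v ∈ B))) :
    (IndFree (pathGraph 6) G'' ∧ IndFree twoP3 G'' ∧ IndFree threeP2 G'') ∧
    -- in particular, `(G', A, B)` is a partitioned probe `(P₆, 2P₃, 3P₂)`-free graph:
    ((∀ u ∈ B, ∀ v ∈ B, ¬ G'.Adj u v) ∧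
      ∃ Gf : SimpleGraph V, G' ≤ Gf ∧
        (∀ u v, Gf.Adj u v → ¬ G'.Adj u v → u ∈ B ∧ v ∈ B) ∧
        IndFree (pathGraph 6) Gf ∧ IndFree twoP3 Gf ∧ IndFree threeP2 Gf) := by
  -- membership in `{v₁, v₂, v₃}` implies membership in `A`
  have hTA : ∀ x, x ∈ ({v₁, v₂, v₃} : Set V) → x ∈ A := by
    intro x hx
    rcases hx with h | h | h <;> subst h <;> assumption
  -- the three key structural facts about `G''`
  have hB : ∀ u v : V, u ∈ B → v ∈ B → u ≠ v → G''.Adj u v := by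
    intro u v hu hv hne
    exact (hG'' u v).mpr (Or.inr ⟨hne, hu, hv⟩)
  have hT : ∀ u v : V, u ∈ ({v₁, v₂, v₃} : Set V) → v ∈ ({v₁, v₂, v₃} : Set V) →
      u ≠ v → G''.Adj u v := by
    intro u v hu hv hne
    exact (hG'' u v).mpr (Or.inl ((hG' u v).mpr (Or.inr ⟨hne, hu, hv⟩)))
  have hcov : ∀ u v : V, G''.Adj u v →
      u ∈ B ∨ v ∈ B ∨ (u ∈ ({v₁, v₂, v₃} : Set V) ∧ v ∈ ({v₁, v₂, v₃} : Set V)) := by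
    intro u v huv
    rcases (hG'' u v).mp huv with h | ⟨_, hu, hv⟩
    · rcases (hG' u v).mp h with h | ⟨_, hu, hv⟩
      · rcases hbip u v h with ⟨_, hv⟩ | ⟨hu, _⟩
        · exact Or.inr (Or.inl hv)
        · exact Or.inl hu
      · exact Or.inr (Or.inr ⟨hu, hv⟩)
    · exact Or.inl hu
  have hfree1 : IndFree (pathGraph 6) G'' :=
    indFree_of_unsat G'' B _ hB hT hcov unsat_path
  have hfree2 : IndFree twoP3 G'' :=
    indFree_of_unsat G'' B _ hB hT hcov unsat_2p3
  have hfree3 : IndFree threeP2 G'' :=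
    indFree_of_unsat G'' B _ hB hT hcov unsat_3p2
  refine ⟨⟨hfree1, hfree2, hfree3⟩, ?_, G'', ?_, ?_, hfree1, hfree2, hfree3⟩
  · -- `B` is independent in `G'`
    intro u hu v hv huv
    rcases (hG' u v).mp huv with h | ⟨_, h1, h2⟩
    · rcases hbip u v h with ⟨hA, _⟩ | ⟨_, hA⟩
      · exact (hpart u).mp hA hu
      · exact (hpart v).mp hA hv
    · exact (hpart u).mp (hTA u h1) hu
  · -- `G' ≤ G''`
    intro u v huv
    exact (hG'' u v).mpr (Or.inl huv)
  · -- fill edges lie inside `B`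
    intro u v huv hnot
    rcases (hG'' u v).mp huv with h | ⟨_, hu, hv⟩
    · exact absurd h hnot
    · exact ⟨hu, hv⟩
end

section
/- Let s ≥ 0 be an integer and let (G,P,N) be a partitioned probe (P3+sP1)-free graph such that G is connected, G is 3-colourable, every vertex of N has degree at least 3 in G, and G[P] is P3-free. Then every vertex u ∈ N has at most 3(s+2) non-neighbours in P. -/
open SimpleGraph

/-- `(G, Nᶜ, N)` is a partitioned probe `H`-free graph. -/
def PartProbeFree {W V : Type*} (H : SimpleGraph W) (G : SimpleGraph V) (N : Set V) : Prop :=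
  (∀ u ∈ N, ∀ v ∈ N, ¬ G.Adj u v) ∧
  ∃ G' : SimpleGraph V, G ≤ G' ∧
    (∀ u v, G'.Adj u v → ¬ G.Adj u v → u ∈ N ∧ v ∈ N) ∧ IndFree H G'

/-- The graph `P₃ + sP₁`: a path `0 - 1 - 2` on three vertices plus `s` isolated vertices. -/
def P3sP1 (s : ℕ) : SimpleGraph (Fin (s + 3)) :=
  SimpleGraph.fromRel (fun i j => ((i : ℕ) = 0 ∧ (j : ℕ) = 1) ∨ ((i : ℕ) = 1 ∧ (j : ℕ) = 2))

set_option maxHeartbeats 2000000 in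
theorem stmt_16 (s : ℕ) {V : Type*} [Fintype V] (G : SimpleGraph V) (P N : Set V)
    (hPN : P = Nᶜ)
    (hprobe : PartProbeFree (P3sP1 s) G N)
    (hconn : G.Connected)
    (hcol : G.Colorable 3)
    (hdeg : ∀ v ∈ N, 3 ≤ (G.neighborSet v).ncard)
    (hP3free : IndFree (pathGraph 3) (G.induce P)) :
    ∀ u ∈ N, ({w | w ∈ P ∧ w ≠ u ∧ ¬ G.Adj u w}).ncard ≤ 3 * (s + 2) := by
  classical
  obtain ⟨hNind, G', hle, hadd, hfree⟩ := hprobe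
  -- helper: adjacency in G' between pairs where one endpoint is not in N agrees with G
  have hsame : ∀ v w : V, v ∉ N → ¬ G.Adj v w → ¬ G'.Adj v w := by
    intro v w hv hg h
    exact hv (hadd v w h hg).1
  obtain ⟨C⟩ := hcol
  -- P3-freeness of G[P] as a concrete statement
  have hP3 : ∀ x w1 w2 : V, x ∈ P → w1 ∈ P → w2 ∈ P → w1 ≠ w2 →
      G.Adj x w1 → G.Adj x w2 → G.Adj w1 w2 := by
    intro x w1 w2 hx h1 h2 hne a1 a2
    by_contra hna
    have hna' : ¬ G.Adj w2 w1 := fun h => hna h.symm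
    apply hP3free.false
    refine ⟨⟨![⟨w1,h1⟩, ⟨x,hx⟩, ⟨w2,h2⟩], ?_⟩, ?_⟩
    · intro i j hij
      fin_cases i <;> fin_cases j <;> simp_all
    · intro i j
      change G.Adj (![(⟨w1,h1⟩ : P), ⟨x,hx⟩, ⟨w2,h2⟩] i).1 (![(⟨w1,h1⟩ : P), ⟨x,hx⟩, ⟨w2,h2⟩] j).1 ↔ (pathGraph 3).Adj i j
      fin_cases i <;> fin_cases j <;>
        simp_all [Function.Embedding.coeFn_mk, pathGraph_adj, comap_adj, a1.symm, a2.symm, a1, a2]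
  intro u hu
  by_contra hcon
  push_neg at hcon
  set W : Set V := {w | w ∈ P ∧ w ≠ u ∧ ¬ G.Adj u w} with hW
  have hWfin : W.Finite := Set.toFinite W
  -- neighbours of u are in P
  have hnbrP : ∀ v, G.Adj u v → v ∈ P := by
    intro v hv
    rw [hPN]
    intro hvN
    exact hNind u hu v hvN hv
  -- find three distinct neighbours of u
  obtain ⟨T, hTsub, hT3⟩ := Set.exists_subset_card_eq (hdeg u hu)
  rw [Set.ncard_eq_three] at hT3
  obtain ⟨a, b, c, hab', hac', hbc', rfl⟩ := hT3
  have hua : G.Adj u a := hTsub (by simp)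
  have hub : G.Adj u b := hTsub (by simp)
  have huc : G.Adj u c := hTsub (by simp)
  -- main argument: given a nonadjacent pair of neighbours of u, contradiction
  have main : ∀ x y : V, x ≠ y → G.Adj u x → G.Adj u y → ¬ G.Adj x y → False := by
    intro x y hxyne hux huy hxy
    have hxP : x ∈ P := hnbrP x hux
    have hyP : y ∈ P := hnbrP y huy
    have hxN : x ∉ N := by rw [hPN] at hxP; exact hxP
    have hyN : y ∉ N := by rw [hPN] at hyP; exact hyP
    -- pigeonhole: a large monochromatic subset of W
    have hWcard : 3 * (s + 2) < (hWfin.toFinset).card := by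
      rwa [← Set.ncard_eq_toFinset_card W hWfin]
    obtain ⟨col, -, hcolI⟩ := Finset.exists_lt_card_fiber_of_mul_lt_card_of_maps_to
      (s := hWfin.toFinset) (t := (Finset.univ : Finset (Fin 3))) (f := fun w => C w)
      (fun a _ => Finset.mem_univ _) (by simpa using hWcard)
    set I : Finset V := hWfin.toFinset.filter (fun w => C w = col) with hIdef
    have hImem : ∀ w ∈ I, w ∈ P ∧ w ≠ u ∧ ¬ G.Adj u w ∧ C w = col := by
      intro w hw
      rw [hIdef, Finset.mem_filter, Set.Finite.mem_toFinset] at hw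
      exact ⟨hw.1.1, hw.1.2.1, hw.1.2.2, hw.2⟩
    -- I is independent in G
    have hIind : ∀ w1 ∈ I, ∀ w2 ∈ I, ¬ G.Adj w1 w2 := by
      intro w1 h1 w2 h2 hadj
      exact C.valid hadj (((hImem w1 h1).2.2.2).trans ((hImem w2 h2).2.2.2).symm)
    -- at most one vertex of I is adjacent to x, resp. y
    have hfil : ∀ z : V, z ∈ P → (I.filter (fun w => G.Adj z w)).card ≤ 1 := by
      intro z hz
      apply Finset.card_le_one.mpr
      intro w1 h1 w2 h2
      rw [Finset.mem_filter] at h1 h2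
      by_contra hne
      exact hIind w1 h1.1 w2 h2.1 (hP3 z w1 w2 hz (hImem w1 h1.1).1 (hImem w2 h2.1).1 hne h1.2 h2.2)
    set J : Finset V := I.filter (fun w => ¬ G.Adj x w ∧ ¬ G.Adj y w) with hJdef
    have hIJ : I ⊆ J ∪ (I.filter (fun w => G.Adj x w)) ∪ (I.filter (fun w => G.Adj y w)) := by
      intro w hw
      simp only [hJdef, Finset.mem_union, Finset.mem_filter]
      by_cases h1 : G.Adj x w
      · exact Or.inl (Or.inr ⟨hw, h1⟩)
      by_cases h2 : G.Adj y w
      · exact Or.inr ⟨hw, h2⟩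
      · exact Or.inl (Or.inl ⟨hw, h1, h2⟩)
    have hJcard : s ≤ J.card := by
      have h1 := hfil x hxP
      have h2 := hfil y hyP
      have h3 := Finset.card_le_card hIJ
      have h4 := Finset.card_union_le (J ∪ (I.filter (fun w => G.Adj x w)))
        (I.filter (fun w => G.Adj y w))
      have h5 := Finset.card_union_le J (I.filter (fun w => G.Adj x w))
      omega
    obtain ⟨K, hKJ, hKcard⟩ := Finset.exists_subset_card_eq hJcard
    -- facts about elements of K
    have hKfact : ∀ k ∈ K, k ∈ P ∧ k ≠ u ∧ ¬ G.Adj u k ∧ ¬ G.Adj x k ∧ ¬ G.Adj y k := by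
      intro k hk
      have hkJ := hKJ hk
      rw [hJdef, Finset.mem_filter] at hkJ
      obtain ⟨hkI, hkx, hky⟩ := hkJ
      exact ⟨(hImem k hkI).1, (hImem k hkI).2.1, (hImem k hkI).2.2.1, hkx, hky⟩
    have hKind : ∀ k ∈ K, ∀ k' ∈ K, ¬ G.Adj k k' := by
      intro k hk k' hk'
      have h1 := hKJ hk; have h2 := hKJ hk'
      rw [hJdef, Finset.mem_filter] at h1 h2
      exact hIind k h1.1 k' h2.1
    -- G'-level facts
    have h'ux : G'.Adj u x := hle hux
    have h'uy : G'.Adj u y := hle huy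
    have h'xy : ¬ G'.Adj x y := hsame x y hxN hxy
    have hKnotN : ∀ k ∈ K, k ∉ N := by
      intro k hk
      have := (hKfact k hk).1
      rw [hPN] at this; exact this
    have h'Ku : ∀ k ∈ K, ¬ G'.Adj k u := fun k hk =>
      hsame k u (hKnotN k hk) (fun h => (hKfact k hk).2.2.1 h.symm)
    have h'Kx : ∀ k ∈ K, ¬ G'.Adj k x := fun k hk =>
      hsame k x (hKnotN k hk) (fun h => (hKfact k hk).2.2.2.1 h.symm)
    have h'Ky : ∀ k ∈ K, ¬ G'.Adj k y := fun k hk =>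
      hsame k y (hKnotN k hk) (fun h => (hKfact k hk).2.2.2.2 h.symm)
    have h'KK : ∀ k ∈ K, ∀ k' ∈ K, ¬ G'.Adj k k' := fun k hk k' hk' =>
      hsame k k' (hKnotN k hk) (hKind k hk k' hk')
    -- distinctness
    have hxu : x ≠ u := hux.ne'
    have hyu : y ≠ u := huy.ne'
    have hxK : x ∉ K := fun h => (hKfact x h).2.2.1 hux
    have hyK : y ∉ K := fun h => (hKfact y h).2.2.1 huy
    have huK : u ∉ K := fun h => (hKfact u h).2.1 rfl
    -- the embedding map
    set f : Fin (s + 3) → V := fun i =>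
      if h0 : (i : ℕ) = 0 then x
      else if h1 : (i : ℕ) = 1 then u
      else if h2 : (i : ℕ) = 2 then y
      else (K.equivFin.symm ⟨(i : ℕ) - 3, by
        have := i.isLt; omega⟩ : V) with hfdef
    have himg : ∀ i : Fin (s + 3),
        (f i = x ∧ (i : ℕ) = 0) ∨ (f i = u ∧ (i : ℕ) = 1) ∨ (f i = y ∧ (i : ℕ) = 2) ∨
        (f i ∈ K ∧ 3 ≤ (i : ℕ)) := by
      intro i
      by_cases h0 : (i : ℕ) = 0
      · exact Or.inl ⟨by simp only [hfdef, dif_pos h0], h0⟩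
      by_cases h1 : (i : ℕ) = 1
      · exact Or.inr (Or.inl ⟨by simp only [hfdef, dif_neg h0, dif_pos h1], h1⟩)
      by_cases h2 : (i : ℕ) = 2
      · exact Or.inr (Or.inr (Or.inl ⟨by simp only [hfdef, dif_neg h0, dif_neg h1, dif_pos h2], h2⟩))
      · refine Or.inr (Or.inr (Or.inr ⟨?_, by omega⟩))
        simp only [hfdef, dif_neg h0, dif_neg h1, dif_neg h2]
        exact (K.equivFin.symm _).2
    have htailinj : ∀ i j : Fin (s + 3), 3 ≤ (i : ℕ) → 3 ≤ (j : ℕ) → f i = f j → i = j := by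
      intro i j hi hj hij
      simp only [hfdef, dif_neg (by omega : ¬ (i : ℕ) = 0), dif_neg (by omega : ¬ (i : ℕ) = 1),
        dif_neg (by omega : ¬ (i : ℕ) = 2), dif_neg (by omega : ¬ (j : ℕ) = 0),
        dif_neg (by omega : ¬ (j : ℕ) = 1), dif_neg (by omega : ¬ (j : ℕ) = 2)] at hij
      have := K.equivFin.symm.injective (Subtype.ext hij)
      have := Fin.mk.inj_iff.mp this
      exact Fin.ext (by omega)
    -- adjacency characterization of P3sP1
    have hP3s : ∀ i j : Fin (s + 3), (P3sP1 s).Adj i j ↔ i ≠ j ∧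
        (((i:ℕ)=0 ∧ (j:ℕ)=1) ∨ ((i:ℕ)=1 ∧ (j:ℕ)=2) ∨ ((j:ℕ)=0 ∧ (i:ℕ)=1) ∨
          ((j:ℕ)=1 ∧ (i:ℕ)=2)) := by
      intro i j
      rw [P3sP1, SimpleGraph.fromRel_adj]
      tauto
    apply hfree.false
    refine ⟨⟨f, ?_⟩, ?_⟩
    · -- injectivity
      intro i j hij
      rcases himg i with ⟨e1, v1⟩ | ⟨e1, v1⟩ | ⟨e1, v1⟩ | ⟨e1, v1⟩ <;>
        rcases himg j with ⟨e2, v2⟩ | ⟨e2, v2⟩ | ⟨e2, v2⟩ | ⟨e2, v2⟩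
      · exact Fin.ext (by omega)
      · exact absurd (e1.symm.trans (hij.trans e2)) hxu
      · exact absurd (e1.symm.trans (hij.trans e2)) hxyne
      · exact absurd (by rw [← e1, hij]; exact e2) hxK
      · exact absurd (e1.symm.trans (hij.trans e2)).symm hxu
      · exact Fin.ext (by omega)
      · exact absurd (e1.symm.trans (hij.trans e2)).symm hyu
      · exact absurd (by rw [← e1, hij]; exact e2) huK
      · exact absurd (e1.symm.trans (hij.trans e2)).symm hxyne
      · exact absurd (e1.symm.trans (hij.trans e2)) hyu
      · exact Fin.ext (by omega)
      · exact absurd (by rw [← e1, hij]; exact e2) hyK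
      · exact absurd (by rw [← e2, ← hij]; exact e1) hxK
      · exact absurd (by rw [← e2, ← hij]; exact e1) huK
      · exact absurd (by rw [← e2, ← hij]; exact e1) hyK
      · exact htailinj i j v1 v2 hij
    · -- map_rel_iff
      intro i j
      show G'.Adj (f i) (f j) ↔ (P3sP1 s).Adj i j
      rw [hP3s]
      rcases himg i with ⟨e1, v1⟩ | ⟨e1, v1⟩ | ⟨e1, v1⟩ | ⟨e1, v1⟩ <;>
        rcases himg j with ⟨e2, v2⟩ | ⟨e2, v2⟩ | ⟨e2, v2⟩ | ⟨e2, v2⟩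
      · rw [e1, e2]
        exact iff_of_false (fun h => h.ne rfl) (fun h => h.1 (Fin.ext (by omega)))
      · rw [e1, e2]
        exact iff_of_true h'ux.symm ⟨Fin.ne_of_val_ne (by omega), by omega⟩
      · rw [e1, e2]
        exact iff_of_false h'xy (fun h => by omega)
      · rw [e1]
        exact iff_of_false (fun h => h'Kx (f j) e2 h.symm) (fun h => by omega)
      · rw [e1, e2]
        exact iff_of_true h'ux ⟨Fin.ne_of_val_ne (by omega), by omega⟩
      · rw [e1, e2]
        exact iff_of_false (fun h => h.ne rfl) (fun h => h.1 (Fin.ext (by omega)))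
      · rw [e1, e2]
        exact iff_of_true h'uy ⟨Fin.ne_of_val_ne (by omega), by omega⟩
      · rw [e1]
        exact iff_of_false (fun h => h'Ku (f j) e2 h.symm) (fun h => by omega)
      · rw [e1, e2]
        exact iff_of_false (fun h => h'xy h.symm) (fun h => by omega)
      · rw [e1, e2]
        exact iff_of_true h'uy.symm ⟨Fin.ne_of_val_ne (by omega), by omega⟩
      · rw [e1, e2]
        exact iff_of_false (fun h => h.ne rfl) (fun h => h.1 (Fin.ext (by omega)))
      · rw [e1]
        exact iff_of_false (fun h => h'Ky (f j) e2 h.symm) (fun h => by omega)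
      · rw [e2]
        exact iff_of_false (fun h => h'Kx (f i) e1 h) (fun h => by omega)
      · rw [e2]
        exact iff_of_false (fun h => h'Ku (f i) e1 h) (fun h => by omega)
      · rw [e2]
        exact iff_of_false (fun h => h'Ky (f i) e1 h) (fun h => by omega)
      · exact iff_of_false (fun h => h'KK (f i) e1 (f j) e2 h) (fun h => by omega)
  -- case analysis on adjacency among a, b, c
  by_cases hab : G.Adj a b
  · by_cases hac : G.Adj a c
    · by_cases hbc : G.Adj b c
      · -- K4: contradiction with 3-colourability
        have d1 : C u ≠ C a := C.valid hua
        have d2 : C u ≠ C b := C.valid hub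
        have d3 : C u ≠ C c := C.valid huc
        have d4 : C a ≠ C b := C.valid hab
        have d5 : C a ≠ C c := C.valid hac
        have d6 : C b ≠ C c := C.valid hbc
        have d1' := d1.symm; have d2' := d2.symm; have d3' := d3.symm
        have d4' := d4.symm; have d5' := d5.symm; have d6' := d6.symm
        obtain ⟨i, j, hne, heq⟩ := Fintype.exists_ne_map_eq_of_card_lt
          (f := ![C u, C a, C b, C c]) (by simp)
        fin_cases i <;> fin_cases j <;> simp_all
      · exact main b c hbc' hub huc hbc
    · exact main a c hac' hua huc hac
  · exact main a b hab' hua hub hab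
end

section
/- Let (G,P,N) be a partitioned probe P5-free graph, let K be a connected component of G[P], and let v ∈ N be a vertex that has a neighbour u ∈ P\V(K). Let S ⊆ V(K) be a set such that G[S] is connected, let A ⊆ S be an independent set of G, and suppose that every neighbour of v in S belongs to A. If v has at least one neighbour in A, then v is adjacent to every vertex of A. -/
open SimpleGraph

lemma p5_emb {V : Type*} (G' : SimpleGraph V) (a b c d e : V)
    (hab : G'.Adj a b) (hbc : G'.Adj b c) (hcd : G'.Adj c d) (hde : G'.Adj d e)
    (hac : ¬G'.Adj a c) (had : ¬G'.Adj a d) (hae : ¬G'.Adj a e)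
    (hbd : ¬G'.Adj b d) (hbe : ¬G'.Adj b e) (hce : ¬G'.Adj c e)
    (nac : a ≠ c) (nbd : b ≠ d) (nce : c ≠ e) (nad : a ≠ d) (nbe : b ≠ e) (nae : a ≠ e) :
    Nonempty (pathGraph 5 ↪g G') := by
  have hca : ¬G'.Adj c a := fun h => hac h.symm
  have hda : ¬G'.Adj d a := fun h => had h.symm
  have hea : ¬G'.Adj e a := fun h => hae h.symm
  have hdb : ¬G'.Adj d b := fun h => hbd h.symm
  have heb : ¬G'.Adj e b := fun h => hbe h.symm
  have hec : ¬G'.Adj e c := fun h => hce h.symm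
  have hba := hab.symm; have hcb := hbc.symm; have hdc := hcd.symm; have hed := hde.symm
  have nca := nac.symm; have ndb := nbd.symm; have nec := nce.symm
  have nda := nad.symm; have neb := nbe.symm; have nea := nae.symm
  have nab := hab.ne; have nbc := hbc.ne; have ncd := hcd.ne; have nde := hde.ne
  have nba := hab.ne'; have ncb := hbc.ne'; have ndc := hcd.ne'; have ned := hde.ne'
  refine ⟨⟨![a,b,c,d,e], ?_⟩, ?_⟩
  · intro i j hij
    fin_cases i <;> fin_cases j <;> simp_all
  · intro i j
    show G'.Adj (![a,b,c,d,e] i) (![a,b,c,d,e] j) ↔ (pathGraph 5).Adj i j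
    fin_cases i <;> fin_cases j <;>
      simp [pathGraph_adj, hab, hbc, hcd, hde, hba, hcb, hdc, hed,
        hac, had, hae, hbd, hbe, hce, hca, hda, hea, hdb, heb, hec] <;> decide

/-- `K` is the vertex set of a connected component of the subgraph of `G` induced by `P`. -/
def IsCompOf {V : Type*} (G : SimpleGraph V) (P K : Set V) : Prop :=
  K ⊆ P ∧ (G.induce K).Connected ∧ ∀ u ∈ K, ∀ w ∈ P, G.Adj u w → w ∈ K

theorem stmt_17 {V : Type*} [Fintype V] (G : SimpleGraph V) (P N : Set V)
    (hPN : P = Nᶜ)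
    (hprobe : PartProbeFree (pathGraph 5) G N)
    (K : Set V) (hK : IsCompOf G P K)
    (v : V) (hv : v ∈ N)
    (u : V) (hu : u ∈ P) (huK : u ∉ K) (hvu : G.Adj v u)
    (S : Set V) (hSK : S ⊆ K) (hSconn : (G.induce S).Connected)
    (A : Set V) (hAS : A ⊆ S)
    (hAindep : ∀ a ∈ A, ∀ b ∈ A, ¬ G.Adj a b)
    (hnbrA : ∀ w ∈ S, G.Adj v w → w ∈ A)
    (hsome : ∃ a ∈ A, G.Adj v a) :
    ∀ a ∈ A, G.Adj v a := by
  obtain ⟨hNind, G', hle, hextra, hfree⟩ := hprobe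
  -- basic facts
  have hSnotN : ∀ s ∈ S, s ∉ N := by
    intro s hs hsN
    have : s ∈ P := hK.1 (hSK hs)
    rw [hPN] at this; exact this hsN
  have huN : u ∉ N := by rw [hPN] at hu; exact hu
  have hnoG' : ∀ p q : V, p ∉ N → ¬ G.Adj p q → ¬ G'.Adj p q := by
    intro p q hpN hpq h
    exact hpN (hextra p q h hpq).1
  have huS : ∀ s ∈ S, ¬ G.Adj u s := by
    intro s hs h
    exact huK (hK.2.2 s (hSK hs) u hu h.symm)
  have hvne : ∀ s ∈ S, v ≠ s := fun s hs h => hSnotN s hs (h ▸ hv)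
  have hune : ∀ s ∈ S, u ≠ s := fun s hs h => huK (h ▸ hSK hs)
  -- key claim by strong induction on distance
  have key : ∀ n : ℕ, ∀ x y : S, (G.induce S).dist x y ≤ n →
      G.Adj v x.val → y.val ∈ A → G.Adj v y.val := by
    intro n
    induction n using Nat.strong_induction_on with
    | _ n ih =>
      intro x y hd hvx hyA
      obtain ⟨w, hw⟩ := (hSconn x y).exists_walk_length_eq_dist
      set d := (G.induce S).dist x y with hdd
      match w, hw with
      | SimpleGraph.Walk.nil, hw =>
          exact hvx
      | SimpleGraph.Walk.cons h SimpleGraph.Walk.nil, hw =>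
          -- x adjacent to y in S; x ∈ A, contradiction with independence
          have hxA : x.val ∈ A := hnbrA x.val x.2 hvx
          exact absurd h (hAindep x.val hxA y.val hyA)
      | SimpleGraph.Walk.cons (v := x1) h1 (SimpleGraph.Walk.cons (v := x2) h2 w''), hw =>
          have hlen : w''.length + 2 = d := by simpa using hw
          have hd1 : (G.induce S).dist x1 y ≤ d - 1 := by
            have := SimpleGraph.dist_le (SimpleGraph.Walk.cons h2 w'')
            simp at this; omega
          have hd2 : (G.induce S).dist x2 y ≤ d - 2 := by
            have := SimpleGraph.dist_le w''
            omega
          have hn2 : 2 ≤ n := by omega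
          by_cases hvx1 : G.Adj v x1.val
          · exact ih (n-1) (by omega) x1 y (by omega) hvx1 hyA
          by_cases hvx2 : G.Adj v x2.val
          · exact ih (n-1) (by omega) x2 y (by omega) hvx2 hyA
          -- build P5: u - v - x - x1 - x2
          exfalso
          have hxx2 : x.val ≠ x2.val := by
            intro hEq
            have hx2x : x2 = x := Subtype.ext hEq.symm
            rw [hx2x] at hd2
            omega
          have h1' : G.Adj x.val x1.val := h1
          have h2' : G.Adj x1.val x2.val := h2
          obtain ⟨emb⟩ := p5_emb G' u v x.val x1.val x2.val
            (hle hvu.symm) (hle hvx) (hle h1') (hle h2')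
            (hnoG' u x.val huN (huS x.val x.2))
            (hnoG' u x1.val huN (huS x1.val x1.2))
            (hnoG' u x2.val huN (huS x2.val x2.2))
            (fun h => hnoG' x1.val v (hSnotN x1.val x1.2) (fun hh => hvx1 hh.symm) h.symm)
            (fun h => hnoG' x2.val v (hSnotN x2.val x2.2) (fun hh => hvx2 hh.symm) h.symm)
            (hnoG' x.val x2.val (hSnotN x.val x.2) (by
              intro hadj
              have hadj' : (G.induce S).Adj x x2 := hadj
              have := SimpleGraph.dist_le (SimpleGraph.Walk.cons hadj' w'')
              simp at this; omega))
            (hune x.val x.2) (hvne x1.val x1.2) hxx2 (hune x1.val x1.2)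
            (hvne x2.val x2.2) (hune x2.val x2.2)
          exact hfree.false emb
  intro a ha
  obtain ⟨a0, ha0A, hva0⟩ := hsome
  have ha0S : a0 ∈ S := hAS ha0A
  have haS : a ∈ S := hAS ha
  exact key ((G.induce S).dist ⟨a0, ha0S⟩ ⟨a, haS⟩) ⟨a0, ha0S⟩ ⟨a, haS⟩ le_rfl hva0 ha
end
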